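/- Splitting claim: Let μ₂ be a partition of [n] with a distinguished block B, |B| ≥ 2, i ∈ B, and let μ₁ be obtained by replacing B with B∖{i} and {i}, distinguishing B∖{i}. Let L_{μ₂}⁺ = supersets of B, L_{μ₁}⁺ = supersets of B∖{i}, and L_{μ₂}^{∂i} = {S : B ⊄ S, B ⊆ S∪{i}}. Then for every φ = Σ_σ α_σ χ_σ ∈ X, ‖Υ^{∂i}_{μ₂} φ‖ ≤ ‖Υ⁺_{μ₁} φ‖. Equivalently, Σ_{τ₂∈ℤ_q^{μ₂}} |Σ_{σ∈S^{∂i}[μ₂,τ₂]} α_σ|² ≤ Σ_{τ₁∈ℤ_q^{μ₁}} |Σ_{σ∈S⁺[μ₁,τ₁]} α_σ|², where S[μ,τ] = {σ ∈ ℤ_q^n : Σ_{i∈B}σ(i) = τ(B) for all B ∈ μ} and the superscripts restrict to σ with supp(σ) in the corresponding knowledge family. -/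

import Mathlib

open scoped BigOperators Classical

/-- Splitting claim: let `μ₂` be a partition of `[n]` (blocks = fibers of
`P : Fin n → Fin m`) with highlighted block `B` (the fiber of `b0`), `|B| ≥ 2`,
`i ∈ B`, and let `μ₁` be obtained by splitting off `i` (blocks = fibers of
`j ↦ if j = i then none else some (P j)`), with highlighted block `B∖{i}`. Then
`Σ_{τ₂} |Σ_{σ∈S^{∂i}[μ₂,τ₂]} α_σ|² ≤ Σ_{τ₁} |Σ_{σ∈S⁺[μ₁,τ₁]} α_σ|²`,
i.e. `‖Υ^{∂i}_{μ₂}φ‖ ≤ ‖Υ⁺_{μ₁}φ‖`. -/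
theorem stmt_14 (n m q : ℕ) [NeZero q]
    (P : Fin n → Fin m) (b0 : Fin m)
    (B : Finset (Fin n)) (hB : B = Finset.univ.filter (fun j => P j = b0))
    (i : Fin n) (hi : i ∈ B) (hcard : 2 ≤ B.card)
    (α : (Fin n → ZMod q) → ℂ) :
    ∑ τ₂ : Fin m → ZMod q,
      ‖∑ σ ∈ Finset.univ.filter (fun σ : Fin n → ZMod q =>
          (∀ b : Fin m, ∑ j ∈ Finset.univ.filter (fun j => P j = b), σ j = τ₂ b) ∧
          ¬ B ⊆ Finset.univ.filter (fun j => σ j ≠ 0) ∧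
          B ⊆ insert i (Finset.univ.filter (fun j => σ j ≠ 0))),
        α σ‖ ^ 2
    ≤ ∑ τ₁ : Option (Fin m) → ZMod q,
      ‖∑ σ ∈ Finset.univ.filter (fun σ : Fin n → ZMod q =>
          (∀ b : Option (Fin m),
            ∑ j ∈ Finset.univ.filter
              (fun j => (if j = i then none else some (P j)) = b), σ j = τ₁ b) ∧
          B.erase i ⊆ Finset.univ.filter (fun j => σ j ≠ 0)),
        α σ‖ ^ 2 := by
  classical
  set F : (Fin m → ZMod q) → (Option (Fin m) → ZMod q) :=
    fun τ o => o.elim 0 τ with hF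
  set g : (Option (Fin m) → ZMod q) → ℝ := fun τ₁ =>
      ‖∑ σ ∈ Finset.univ.filter (fun σ : Fin n → ZMod q =>
          (∀ b : Option (Fin m),
            ∑ j ∈ Finset.univ.filter
              (fun j => (if j = i then none else some (P j)) = b), σ j = τ₁ b) ∧
          B.erase i ⊆ Finset.univ.filter (fun j => σ j ≠ 0)),
        α σ‖ ^ 2 with hg
  have hPi : P i = b0 := by
    rw [hB] at hi; simpa using hi
  -- fiber computations
  have hfib_none : (Finset.univ.filter
      (fun j : Fin n => (if j = i then none else some (P j)) = (none : Option (Fin m))))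
      = {i} := by
    ext j
    by_cases h : j = i <;> simp [h]
  have hfib_some : ∀ b : Fin m, (Finset.univ.filter
      (fun j : Fin n => (if j = i then none else some (P j)) = some b))
      = (Finset.univ.filter (fun j => P j = b)).erase i := by
    intro b
    ext j
    by_cases h : j = i <;> simp [h]
  -- key equivalence of conditions
  have key : ∀ τ₂ : Fin m → ZMod q, ∀ σ : Fin n → ZMod q,
      ((∀ b : Fin m, ∑ j ∈ Finset.univ.filter (fun j => P j = b), σ j = τ₂ b) ∧
          ¬ B ⊆ Finset.univ.filter (fun j => σ j ≠ 0) ∧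
          B ⊆ insert i (Finset.univ.filter (fun j => σ j ≠ 0)))
      ↔ ((∀ b : Option (Fin m),
            ∑ j ∈ Finset.univ.filter
              (fun j => (if j = i then none else some (P j)) = b), σ j = F τ₂ b) ∧
          B.erase i ⊆ Finset.univ.filter (fun j => σ j ≠ 0)) := by
    intro τ₂ σ
    constructor
    · rintro ⟨hsum, hnsub, hsub⟩
      have hσi : σ i = 0 := by
        by_contra h
        apply hnsub
        intro j hj
        rcases Finset.mem_insert.mp (hsub hj) with rfl | hj'
        · simp [h]
        · exact hj'
      refine ⟨?_, ?_⟩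
      · intro b
        cases b with
        | none => rw [hfib_none]; simp [hσi, hF]
        | some b =>
          rw [hfib_some b, Finset.sum_erase _ hσi]
          simpa [hF] using hsum b
      · intro j hj
        rcases Finset.mem_erase.mp hj with ⟨hji, hjB⟩
        rcases Finset.mem_insert.mp (hsub hjB) with rfl | hj'
        · exact absurd rfl hji
        · exact hj'
    · rintro ⟨hsum, hsub⟩
      have hσi : σ i = 0 := by
        have := hsum none
        rw [hfib_none] at this
        simpa [hF] using this
      refine ⟨?_, ?_, ?_⟩
      · intro b
        have := hsum (some b)
        rw [hfib_some b, Finset.sum_erase _ hσi] at this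
        simpa [hF] using this
      · intro h
        have := h hi
        simp [hσi] at this
      · intro j hj
        by_cases hji : j = i
        · rw [hji]; exact Finset.mem_insert_self _ _
        · exact Finset.mem_insert_of_mem (hsub (Finset.mem_erase.mpr ⟨hji, hj⟩))
  have hterm : ∀ τ₂ : Fin m → ZMod q,
      ‖∑ σ ∈ Finset.univ.filter (fun σ : Fin n → ZMod q =>
          (∀ b : Fin m, ∑ j ∈ Finset.univ.filter (fun j => P j = b), σ j = τ₂ b) ∧
          ¬ B ⊆ Finset.univ.filter (fun j => σ j ≠ 0) ∧
          B ⊆ insert i (Finset.univ.filter (fun j => σ j ≠ 0))),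
        α σ‖ ^ 2 = g (F τ₂) := by
    intro τ₂
    have hset : Finset.univ.filter (fun σ : Fin n → ZMod q =>
          (∀ b : Fin m, ∑ j ∈ Finset.univ.filter (fun j => P j = b), σ j = τ₂ b) ∧
          ¬ B ⊆ Finset.univ.filter (fun j => σ j ≠ 0) ∧
          B ⊆ insert i (Finset.univ.filter (fun j => σ j ≠ 0)))
        = Finset.univ.filter (fun σ : Fin n → ZMod q =>
          (∀ b : Option (Fin m),
            ∑ j ∈ Finset.univ.filter
              (fun j => (if j = i then none else some (P j)) = b), σ j = F τ₂ b) ∧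
          B.erase i ⊆ Finset.univ.filter (fun j => σ j ≠ 0)) :=
      Finset.filter_congr fun σ _ => key τ₂ σ
    simp only [hg]
    rw [hset]
  have hFinj : Function.Injective F := by
    intro a b hab
    funext b'
    exact congrFun hab (some b')
  calc ∑ τ₂ : Fin m → ZMod q, ‖∑ σ ∈ Finset.univ.filter (fun σ : Fin n → ZMod q =>
          (∀ b : Fin m, ∑ j ∈ Finset.univ.filter (fun j => P j = b), σ j = τ₂ b) ∧
          ¬ B ⊆ Finset.univ.filter (fun j => σ j ≠ 0) ∧
          B ⊆ insert i (Finset.univ.filter (fun j => σ j ≠ 0))),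
        α σ‖ ^ 2
      = ∑ τ₂ : Fin m → ZMod q, g (F τ₂) := by
        exact Finset.sum_congr rfl fun τ₂ _ => hterm τ₂
    _ = ∑ τ₁ ∈ Finset.univ.image F, g τ₁ := by
        rw [Finset.sum_image (fun a _ b _ h => hFinj h)]
    _ ≤ ∑ τ₁ : Option (Fin m) → ZMod q, g τ₁ := by
        apply Finset.sum_le_sum_of_subset_of_nonneg (Finset.subset_univ _)
        intro τ₁ _ _
        positivity
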